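/- Let R be a Koszul standard graded k-algebra, M a graded R-module with indeg M = 0, and suppose there is an exact sequence of graded R-modules 0 → L → R(−m)^{b_m} → ⋯ → R(−1)^{b_1} → R^{b_0} → M → 0 with L_j = 0 for j ≤ m. Then H_M(s) = Σ_{i=0}^m (−1)^i b_i s^i H_R(s) + (−1)^{m+1} H_L(s), and consequently P^R_M(s,t) ≡ H_M(−st)·H_R(−st)^{−1} (mod t^{m+1}). -/

import Mathlib

section StmtAux

open DirectSum

variable {k : Type*} [Field k]

/-- Projection data for an internal grading: a family of linear projections. -/
structure ProjData (k : Type*) [Field k] (V : Type*) [AddCommGroup V] [Module k V]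
    (𝒱 : ℤ → Submodule k V) where
  π : ℤ → (V →ₗ[k] V)
  mem : ∀ j v, π j v ∈ 𝒱 j
  of_mem : ∀ j, ∀ v ∈ 𝒱 j, π j v = v
  of_ne : ∀ i j, i ≠ j → ∀ v ∈ 𝒱 i, π j v = 0
  spec : ∀ v : V, ∃ s : Finset ℤ, v = ∑ j ∈ s, π j v

namespace ProjData

variable {V : Type*} [AddCommGroup V] [Module k V] {𝒱 : ℤ → Submodule k V}

noncomputable def ofInternal (h : DirectSum.IsInternal 𝒱) : ProjData k V 𝒱 := by
  classical
  letI := h.chooseDecomposition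
  refine
  { π := fun j =>
      { toFun := fun v => (DirectSum.decompose 𝒱 v j : V)
        map_add' := by
          intro a c
          show ((DirectSum.decompose 𝒱 (a + c) j : V)) = _
          rw [DirectSum.decompose_add]; rfl
        map_smul' := by
          intro a c
          show ((DirectSum.decompose 𝒱 (a • c) j : V)) = _
          rw [DirectSum.decompose_smul]; rfl }
    mem := fun j v => (DirectSum.decompose 𝒱 v j).2
    of_mem := fun j v hv => DirectSum.decompose_of_mem_same 𝒱 hv
    of_ne := fun i j hij v hv => DirectSum.decompose_of_mem_ne 𝒱 hv hij
    spec := fun v => ⟨(DirectSum.decompose 𝒱 v).support, (DirectSum.sum_support_decompose 𝒱 v).symm⟩ }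

theorem pi_eq_zero_of_not_mem (P : ProjData k V 𝒱) {v : V} {s : Finset ℤ}
    (hs : v = ∑ j ∈ s, P.π j v) {j' : ℤ} (hj' : j' ∉ s) : P.π j' v = 0 := by
  conv_lhs => rw [hs]
  rw [map_sum]
  refine Finset.sum_eq_zero fun i hi => ?_
  exact P.of_ne i j' (fun h => hj' (h ▸ hi)) _ (P.mem i v)

theorem sum_superset (P : ProjData k V 𝒱) {v : V} {s : Finset ℤ}
    (hs : v = ∑ j ∈ s, P.π j v) {t : Finset ℤ} (hst : s ⊆ t) :
    v = ∑ j ∈ t, P.π j v := by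
  rw [← Finset.sum_subset hst (fun x _ hx => P.pi_eq_zero_of_not_mem hs hx)]
  exact hs

/-- Shift a grading. -/
def shift (P : ProjData k V 𝒱) (n : ℤ) : ProjData k V (fun j => 𝒱 (j - n)) where
  π := fun j => P.π (j - n)
  mem := fun j v => P.mem _ v
  of_mem := fun j v hv => P.of_mem _ v hv
  of_ne := fun i j hij v hv => P.of_ne _ _ (fun h => hij (by omega)) v hv
  spec := fun v => by
    classical
    obtain ⟨s, hs⟩ := P.spec v
    refine ⟨s.image (· + n), ?_⟩
    rw [Finset.sum_image (by intro a _ c _ h; simpa using h)]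
    simpa using hs

/-- Componentwise grading on a finite product. -/
def piData (P : ProjData k V 𝒱) (ι : Type*) [Fintype ι] :
    ProjData k (ι → V) (fun j => Submodule.pi Set.univ (fun _ : ι => 𝒱 j)) where
  π := fun j => LinearMap.pi (fun i => (P.π j).comp (LinearMap.proj i))
  mem := fun j v i _ => P.mem j (v i)
  of_mem := fun j v hv => funext fun i => P.of_mem j (v i) (hv i trivial)
  of_ne := fun i j hij v hv => funext fun a => by
    simpa using P.of_ne i j hij (v a) (hv a trivial)
  spec := fun v => by
    classical
    refine ⟨Finset.univ.biUnion (fun i : ι => (P.spec (v i)).choose), funext fun i => ?_⟩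
    have h1 := P.sum_superset (P.spec (v i)).choose_spec
      (Finset.subset_biUnion_of_mem (fun a : ι => (P.spec (v a)).choose) (Finset.mem_univ i))
    rw [Finset.sum_apply]
    exact h1

end ProjData

section Graded

variable {V W : Type*} [AddCommGroup V] [Module k V] [AddCommGroup W] [Module k W]
variable {𝒱 : ℤ → Submodule k V} {𝒲 : ℤ → Submodule k W}

theorem proj_comm (P : ProjData k V 𝒱) (Q : ProjData k W 𝒲) (f : V →ₗ[k] W)
    (hf : ∀ i : ℤ, ∀ x ∈ 𝒱 i, f x ∈ 𝒲 i) (j : ℤ) (v : V) :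
    Q.π j (f v) = f (P.π j v) := by
  classical
  obtain ⟨s, hs⟩ := P.spec v
  conv_lhs => rw [hs]
  rw [map_sum, map_sum]
  have : ∀ i ∈ s, Q.π j (f (P.π i v)) = if i = j then f (P.π j v) else 0 := by
    intro i _
    by_cases h : i = j
    · subst h; simp only [if_pos rfl]; exact Q.of_mem _ _ (hf _ _ (P.mem _ v))
    · simp [h, Q.of_ne i j h _ (hf i _ (P.mem i v))]
  rw [Finset.sum_congr rfl this, Finset.sum_ite_eq' s j (fun _ => f (P.π j v))]
  by_cases hj : j ∈ s
  · simp [hj]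
  · simp [hj, P.pi_eq_zero_of_not_mem hs hj]

/-- Degreewise exactness from exactness plus gradedness. -/
theorem graded_exact_map {U : Type*} [AddCommGroup U] [Module k U] {𝒰 : ℤ → Submodule k U}
    (PU : ProjData k U 𝒰) (PV : ProjData k V 𝒱)
    (f : U →ₗ[k] V) (g : V →ₗ[k] W)
    (hf : ∀ i : ℤ, ∀ x ∈ 𝒰 i, f x ∈ 𝒱 i)
    (hexact : Function.Exact f g) (j : ℤ) :
    (𝒰 j).map f = 𝒱 j ⊓ (LinearMap.ker g) := by
  apply le_antisymm
  · rintro _ ⟨x, hx, rfl⟩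
    exact ⟨hf j x hx, by simpa [LinearMap.mem_ker] using (hexact (f x)).2 ⟨x, rfl⟩⟩
  · rintro x ⟨hx1, hx2⟩
    obtain ⟨u, hu⟩ := (hexact x).1 hx2
    refine ⟨PU.π j u, PU.mem j u, ?_⟩
    have := proj_comm PU PV f hf j u
    rw [hu] at this
    rw [← this, PV.of_mem j x hx1]

/-- Degreewise surjectivity. -/
theorem graded_surj_map (PV : ProjData k V 𝒱) (PW : ProjData k W 𝒲)
    (g : V →ₗ[k] W)
    (hg : ∀ i : ℤ, ∀ x ∈ 𝒱 i, g x ∈ 𝒲 i)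
    (hsurj : Function.Surjective g) (j : ℤ) :
    (𝒱 j).map g = 𝒲 j := by
  apply le_antisymm
  · rintro _ ⟨x, hx, rfl⟩; exact hg j x hx
  · intro y hy
    obtain ⟨v, hv⟩ := hsurj y
    refine ⟨PV.π j v, PV.mem j v, ?_⟩
    have := proj_comm PV PW g hg j v
    rw [hv] at this
    rw [← this, PW.of_mem j y hy]

end Graded

variable {k : Type*} [Field k]

section RankHelpers

variable {V W : Type*} [AddCommGroup V] [Module k V] [AddCommGroup W] [Module k W]

/-- The pi submodule is equivalent to the pi of the submodule. -/
def piSubEquiv {ι : Type*} (p : Submodule k V) :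
    (Submodule.pi Set.univ fun _ : ι => p) ≃ₗ[k] (ι → p) where
  toFun f i := ⟨f.1 i, f.2 i trivial⟩
  invFun g := ⟨fun i => g i, fun i _ => (g i).2⟩
  map_add' _ _ := rfl
  map_smul' _ _ := rfl
  left_inv f := rfl
  right_inv g := rfl

theorem finrank_piSub {ι : Type*} [Fintype ι] (p : Submodule k V) [FiniteDimensional k p] :
    Module.finrank k (Submodule.pi Set.univ fun _ : ι => p) =
      Fintype.card ι * Module.finrank k p := by
  rw [LinearEquiv.finrank_eq (piSubEquiv p), Module.finrank_pi_fintype,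
    Finset.sum_const, Finset.card_univ, smul_eq_mul]

instance finiteDimensional_piSub {ι : Type*} [Fintype ι] (p : Submodule k V)
    [FiniteDimensional k p] :
    FiniteDimensional k (Submodule.pi Set.univ fun _ : ι => p) :=
  LinearEquiv.finiteDimensional (piSubEquiv p).symm

theorem finrank_comap_subtype (p : Submodule k V) (q : Submodule k V) :
    Module.finrank k (q.comap p.subtype) = Module.finrank k (q ⊓ p : Submodule k V) := by
  have h : q.comap p.subtype = (q ⊓ p).comap p.subtype := by
    ext x; simp [x.2]
  rw [h, LinearEquiv.finrank_eq (Submodule.comapSubtypeEquivOfLe inf_le_right)]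

/-- Rank–nullity for a restricted map. -/
theorem finrank_map_add_finrank_inf_ker (f : V →ₗ[k] W) (p : Submodule k V)
    [FiniteDimensional k p] :
    Module.finrank k (p.map f) + Module.finrank k (LinearMap.ker f ⊓ p : Submodule k V) =
      Module.finrank k p := by
  have h := LinearMap.finrank_range_add_finrank_ker (f.domRestrict p)
  rwa [LinearMap.range_domRestrict, LinearMap.ker_domRestrict,
    finrank_comap_subtype] at h

theorem finrank_map_of_injective (f : V →ₗ[k] W) (hf : Function.Injective f)
    (p : Submodule k V) :
    Module.finrank k (p.map f) = Module.finrank k p :=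
  (LinearEquiv.finrank_eq (p.equivMapOfInjective f hf)).symm

end RankHelpers

theorem telescope_sum (g : ℕ → ℤ) : ∀ N : ℕ,
    ∑ i ∈ Finset.range (N + 1), (-1 : ℤ) ^ i * (g i + g (i + 1)) =
      g 0 + (-1) ^ N * g (N + 1) := by
  intro N
  induction N with
  | zero => simp
  | succ N ih =>
    rw [Finset.sum_range_succ, ih, pow_succ]
    ring

theorem Pi.single_eq_smul_single_one {R : Type*} [CommRing R] {N : ℕ} (l : Fin N) (c : R) :
    (Pi.single l c : Fin N → R) = c • (Pi.single l 1 : Fin N → R) := by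
  funext a
  by_cases h : a = l <;> simp [Pi.single_apply, h]

theorem LinearMap.apply_eq_sum_single {R : Type*} [CommRing R] {N : ℕ} {W : Type*}
    [AddCommGroup W] [Module R W] (F : (Fin N → R) →ₗ[R] W) (x : Fin N → R) :
    F x = ∑ l : Fin N, x l • F (Pi.single l 1) := by
  conv_lhs => rw [← Finset.univ_sum_single x]
  rw [map_sum]
  refine Finset.sum_congr rfl fun l _ => ?_
  rw [Pi.single_eq_smul_single_one, map_smul]

end StmtAux


/-- A standard graded `k`-algebra structure on `R`, recorded via a family of
`k`-submodules `𝒜 j` (the graded components): `R = ⊕ 𝒜 j`, `𝒜 j = 0` for `j < 0`,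
`𝒜 0 = k·1`, `R` is generated in degree one, and all components are finite dimensional. -/
structure IsStandardGraded (k : Type*) [Field k] (R : Type*) [CommRing R] [Algebra k R]
    (𝒜 : ℤ → Submodule k R) : Prop where
  internal : DirectSum.IsInternal 𝒜
  one_mem : (1 : R) ∈ 𝒜 0
  mul_mem : ∀ ⦃i j : ℤ⦄ ⦃x y : R⦄, x ∈ 𝒜 i → y ∈ 𝒜 j → x * y ∈ 𝒜 (i + j)
  bot_of_neg : ∀ i : ℤ, i < 0 → 𝒜 i = ⊥
  deg_zero : 𝒜 0 = Submodule.span k {(1 : R)}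
  gen_in_deg_one : ∀ i : ℤ, 0 ≤ i → 𝒜 (i + 1) = 𝒜 1 * 𝒜 i
  finite_dim : ∀ i : ℤ, FiniteDimensional k (𝒜 i)

/-- A grading on an `R`-module `M` compatible with a grading `𝒜` on `R`,
with finite-dimensional components. -/
structure IsGradedModule (k : Type*) [Field k] (R : Type*) [CommRing R] [Algebra k R]
    (𝒜 : ℤ → Submodule k R) (M : Type*) [AddCommGroup M] [Module R M] [Module k M]
    [IsScalarTower k R M] (ℳ : ℤ → Submodule k M) : Prop where
  internal : DirectSum.IsInternal ℳ
  smul_mem : ∀ ⦃i j : ℤ⦄ ⦃x : R⦄ ⦃m : M⦄, x ∈ 𝒜 i → m ∈ ℳ j → x • m ∈ ℳ (i + j)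
  finite_dim : ∀ j : ℤ, FiniteDimensional k (ℳ j)

/-- A linear (minimal, degree-`d`) free resolution of the graded `R`-module `M`:
an exact complex `⋯ → R(−d−n−1)^{β (n+1)} → R(−d−n)^{β n} → ⋯ → R(−d)^{β 0} → M → 0`
in which every differential is given by a matrix with entries in `R₁ = 𝒜 1`, and the
generators of the `n`-th free module map to degree `d + n`. Its existence says exactly
that `M` is a linear module with `indeg M = d` (a Koszul module when `d = 0`). -/
structure LinearResolution (k : Type*) [Field k] (R : Type*) [CommRing R] [Algebra k R]
    (𝒜 : ℤ → Submodule k R) (M : Type*) [AddCommGroup M] [Module R M] [Module k M]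
    [IsScalarTower k R M] (ℳ : ℤ → Submodule k M) (d : ℤ) where
  β : ℕ → ℕ
  dd : ∀ n : ℕ, (Fin (β (n + 1)) → R) →ₗ[R] (Fin (β n) → R)
  aug : (Fin (β 0) → R) →ₗ[R] M
  aug_surjective : Function.Surjective aug
  aug_deg : ∀ i, aug (Pi.single i 1) ∈ ℳ d
  dd_linear : ∀ (n : ℕ) (i : Fin (β (n + 1))) (j : Fin (β n)),
    dd n (Pi.single i 1) j ∈ 𝒜 1
  exact_aug : Function.Exact (dd 0) aug
  exact_dd : ∀ n : ℕ, Function.Exact (dd (n + 1)) (dd n)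

/-- `R` is a Koszul algebra: the residue field `k = R/R₊ = R/(R₁)` has a linear
free resolution over `R`. -/
def IsKoszulAlgebra (k : Type*) [Field k] (R : Type*) [CommRing R] [Algebra k R]
    (𝒜 : ℤ → Submodule k R) : Prop :=
  Nonempty (LinearResolution k R 𝒜 (R ⧸ Ideal.span (𝒜 1 : Set R))
    (fun j => (𝒜 j).map ((Ideal.span (𝒜 1 : Set R)).mkQ.restrictScalars k)) 0)

/-- Proposition 1.7, (i)⇒(ii): let `R` be Koszul, and let
`0 → L → R(−m)^{b_m} → ⋯ → R(−1)^{b_1} → R^{b_0} → M → 0` (here `m = m' + 1 ≥ 1`)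
be an exact sequence of graded `R`-modules with `L_j = 0` for `j ≤ m`.  Then
`H_M(s) = Σ_{i=0}^m (−1)^i b_i s^i H_R(s) + (−1)^{m+1} H_L(s)` (coefficientwise),
and consequently `P^R_M(s,t) ≡ H_M(−st)·H_R(−st)^{−1} (mod t^{m+1})`, i.e.
`(Σ_i b_i t^i)·H_R(−t) ≡ H_M(−t)` modulo `t^{m+1}`. -/
theorem stmt16 {k R M L : Type*} [Field k] [CommRing R] [Algebra k R]
    [AddCommGroup M] [Module R M] [Module k M] [IsScalarTower k R M]
    [AddCommGroup L] [Module R L] [Module k L] [IsScalarTower k R L]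
    (𝒜 : ℤ → Submodule k R) (hR : IsStandardGraded k R 𝒜)
    (hKoszul : IsKoszulAlgebra k R 𝒜)
    (ℳ : ℤ → Submodule k M) (hM : IsGradedModule k R 𝒜 M ℳ)
    (hMind : ∀ j : ℤ, j < 0 → ℳ j = ⊥)
    (ℒ : ℤ → Submodule k L) (hL : IsGradedModule k R 𝒜 L ℒ)
    (m' : ℕ) (b : ℕ → ℕ)
    (dd : ∀ n : ℕ, n ≤ m' → ((Fin (b (n + 1)) → R) →ₗ[R] (Fin (b n) → R)))
    (aug : (Fin (b 0) → R) →ₗ[R] M)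
    (ιL : L →ₗ[R] (Fin (b (m' + 1)) → R))
    (haug_surj : Function.Surjective aug)
    (haug_deg : ∀ i, aug (Pi.single i 1) ∈ ℳ 0)
    (hdd_deg : ∀ (n : ℕ) (h : n ≤ m') (i : Fin (b (n + 1))) (j : Fin (b n)),
      dd n h (Pi.single i 1) j ∈ 𝒜 1)
    (hι_inj : Function.Injective ιL)
    (hι_deg : ∀ (j : ℤ), ∀ x ∈ ℒ j, ∀ i : Fin (b (m' + 1)),
      ιL x i ∈ 𝒜 (j - (m' + 1)))
    (hexact_aug : Function.Exact (dd 0 (Nat.zero_le m')) aug)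
    (hexact_mid : ∀ (n : ℕ) (h : n + 1 ≤ m'),
      Function.Exact (dd (n + 1) h) (dd n (Nat.le_of_succ_le h)))
    (hexact_top : Function.Exact ιL (dd m' le_rfl))
    (hLvanish : ∀ j : ℤ, j ≤ (m' : ℤ) + 1 → ℒ j = ⊥) :
    (∀ j : ℤ, (Module.finrank k (ℳ j) : ℤ) =
      (∑ i ∈ Finset.range (m' + 2),
        (-1 : ℤ) ^ i * b i * Module.finrank k (𝒜 (j - i))) +
      (-1 : ℤ) ^ (m' + 2) * Module.finrank k (ℒ j)) ∧
    (∀ n : ℕ, n ≤ m' + 1 →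
      PowerSeries.coeff n ((PowerSeries.mk fun i => (b i : ℤ)) *
        (PowerSeries.mk fun i => (-1 : ℤ) ^ i * Module.finrank k (𝒜 (i : ℤ)))) =
      PowerSeries.coeff n
        (PowerSeries.mk fun i => (-1 : ℤ) ^ i * Module.finrank k (ℳ (i : ℤ)))) := by

  classical
  haveI hfA : ∀ i : ℤ, FiniteDimensional k (𝒜 i) := hR.finite_dim
  haveI hfM : ∀ i : ℤ, FiniteDimensional k (ℳ i) := hM.finite_dim
  haveI hfL : ∀ i : ℤ, FiniteDimensional k (ℒ i) := hL.finite_dim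
  -- projection data
  have PR : ProjData k R 𝒜 := ProjData.ofInternal hR.internal
  have PM : ProjData k M ℳ := ProjData.ofInternal hM.internal
  have PL : ProjData k L ℒ := ProjData.ofInternal hL.internal
  have PF : ∀ n : ℕ, ProjData k (Fin (b n) → R)
      (fun j => Submodule.pi Set.univ fun _ : Fin (b n) => 𝒜 (j - n)) :=
    fun n => (PR.shift (n : ℤ)).piData (Fin (b n))
  -- gradedness of aug
  have haugg : ∀ i : ℤ, ∀ x ∈ (fun j => Submodule.pi Set.univ
      fun _ : Fin (b 0) => 𝒜 (j - (0 : ℕ))) i, (aug.restrictScalars k) x ∈ ℳ i := by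
    intro i x hx
    show aug x ∈ ℳ i
    rw [LinearMap.apply_eq_sum_single aug x]
    refine Submodule.sum_mem _ fun l _ => ?_
    have h1 : x l ∈ 𝒜 (i - (0 : ℕ)) := hx l trivial
    have h2 := hM.smul_mem h1 (haug_deg l)
    convert h2 using 2
    push_cast
    ring
  -- gradedness of dd
  have hddg : ∀ (n : ℕ) (h : n ≤ m') (i : ℤ), ∀ x ∈ (fun j => Submodule.pi Set.univ
      fun _ : Fin (b (n + 1)) => 𝒜 (j - ((n + 1 : ℕ) : ℤ))) i,
      ((dd n h).restrictScalars k) x ∈ Submodule.pi Set.univ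
        (fun _ : Fin (b n) => 𝒜 (i - (n : ℕ))) := by
    intro n h i x hx
    show dd n h x ∈ _
    rw [LinearMap.apply_eq_sum_single (dd n h) x]
    refine Submodule.sum_mem _ fun l _ => ?_
    intro a _
    have h1 : x l ∈ 𝒜 (i - ((n : ℤ) + 1)) := by
      have := hx l trivial
      push_cast at this ⊢
      exact this
    have h2 : (x l • dd n h (Pi.single l 1)) a = x l * (dd n h (Pi.single l 1)) a := rfl
    rw [h2]
    have h3 := hR.mul_mem h1 (hdd_deg n h l a)
    have h4 : i - ((n : ℤ) + 1) + 1 = i - (n : ℤ) := by ring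
    rw [h4] at h3
    exact h3
  -- gradedness of ι
  have hιg : ∀ i : ℤ, ∀ x ∈ ℒ i, (ιL.restrictScalars k) x ∈ Submodule.pi Set.univ
      (fun _ : Fin (b (m' + 1)) => 𝒜 (i - ((m' + 1 : ℕ) : ℤ))) := by
    intro i x hx a _
    show ιL x a ∈ _
    push_cast
    exact hι_deg i x hx a
  have key : ∀ j : ℤ, (Module.finrank k (ℳ j) : ℤ) =
      (∑ i ∈ Finset.range (m' + 2),
        (-1 : ℤ) ^ i * b i * Module.finrank k (𝒜 (j - i))) +
      (-1 : ℤ) ^ (m' + 2) * Module.finrank k (ℒ j) := by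
    intro j
    have hD : ∃ D : ℕ → ℕ, D 0 = Module.finrank k (ℳ j) ∧
        D (m' + 2) = Module.finrank k (ℒ j) ∧
        ∀ n : ℕ, n ≤ m' + 1 →
          b n * Module.finrank k (𝒜 (j - (n : ℕ))) = D n + D (n + 1) := by
      refine ⟨fun n => Nat.casesOn n (Module.finrank k (ℳ j)) (fun n' =>
        if h : n' ≤ m' then Module.finrank k
          ((Submodule.pi Set.univ fun _ : Fin (b (n' + 1)) =>
            𝒜 (j - ((n' + 1 : ℕ) : ℤ))).map ((dd n' h).restrictScalars k))
        else Module.finrank k (ℒ j)), rfl, dif_neg (by omega), ?_⟩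
      intro n hn
      have hPrank : ∀ N : ℕ, Module.finrank k
          (Submodule.pi Set.univ fun _ : Fin (b N) => 𝒜 (j - (N : ℤ))) =
          b N * Module.finrank k (𝒜 (j - (N : ℤ))) := fun N => by
        rw [finrank_piSub]
        simp
      rcases n with _ | n'
      · show b 0 * Module.finrank k (𝒜 (j - ((0 : ℕ) : ℤ))) =
          Module.finrank k (ℳ j) +
          (if h : 0 ≤ m' then Module.finrank k
            ((Submodule.pi Set.univ fun _ : Fin (b (0 + 1)) =>
              𝒜 (j - ((0 + 1 : ℕ) : ℤ))).map ((dd 0 h).restrictScalars k))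
          else Module.finrank k (ℒ j))
        rw [dif_pos (Nat.zero_le m')]
        have e1 := finrank_map_add_finrank_inf_ker (aug.restrictScalars k)
          (Submodule.pi Set.univ fun _ : Fin (b 0) => 𝒜 (j - ((0 : ℕ) : ℤ)))
        have e2 : (Submodule.pi Set.univ fun _ : Fin (b 0) =>
            𝒜 (j - ((0 : ℕ) : ℤ))).map (aug.restrictScalars k) = ℳ j :=
          graded_surj_map (PF 0) PM _ haugg haug_surj j
        have e3 := graded_exact_map (PF 1) (PF 0)
          ((dd 0 (Nat.zero_le m')).restrictScalars k) (aug.restrictScalars k)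
          (hddg 0 (Nat.zero_le m')) hexact_aug j
        rw [← hPrank 0, ← e1, e2, e3, inf_comm]
      · have h' : n' ≤ m' := by omega
        show b (n' + 1) * Module.finrank k (𝒜 (j - ((n' + 1 : ℕ) : ℤ))) =
          (if h : n' ≤ m' then Module.finrank k
            ((Submodule.pi Set.univ fun _ : Fin (b (n' + 1)) =>
              𝒜 (j - ((n' + 1 : ℕ) : ℤ))).map ((dd n' h).restrictScalars k))
          else Module.finrank k (ℒ j)) +
          (if h : n' + 1 ≤ m' then Module.finrank k
            ((Submodule.pi Set.univ fun _ : Fin (b (n' + 1 + 1)) =>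
              𝒜 (j - ((n' + 1 + 1 : ℕ) : ℤ))).map ((dd (n' + 1) h).restrictScalars k))
          else Module.finrank k (ℒ j))
        rw [dif_pos h']
        have e1 := finrank_map_add_finrank_inf_ker ((dd n' h').restrictScalars k)
          (Submodule.pi Set.univ fun _ : Fin (b (n' + 1)) => 𝒜 (j - ((n' + 1 : ℕ) : ℤ)))
        by_cases hc : n' + 1 ≤ m'
        · rw [dif_pos hc]
          have e3 := graded_exact_map (PF (n' + 2)) (PF (n' + 1))
            ((dd (n' + 1) hc).restrictScalars k) ((dd n' h').restrictScalars k)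
            (hddg (n' + 1) hc) (hexact_mid n' hc) j
          rw [← hPrank (n' + 1), ← e1, e3, inf_comm]
        · have hc' : n' = m' := by omega
          subst hc'
          rw [dif_neg hc]
          have e3 := graded_exact_map PL (PF (n' + 1))
            (ιL.restrictScalars k) ((dd n' h').restrictScalars k)
            hιg hexact_top j
          have e4 : Module.finrank k ((ℒ j).map (ιL.restrictScalars k)) =
              Module.finrank k (ℒ j) :=
            finrank_map_of_injective _ hι_inj _
          rw [← hPrank (n' + 1), ← e1, ← e4, e3, inf_comm]
    obtain ⟨D, hD0, hDtop, hDchain⟩ := hD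
    have hsum : ∀ i ∈ Finset.range (m' + 2),
        (-1 : ℤ) ^ i * b i * Module.finrank k (𝒜 (j - i)) =
        (-1 : ℤ) ^ i * ((D i : ℤ) + D (i + 1)) := by
      intro i hi
      have := hDchain i (by simpa using Nat.lt_succ_iff.mp (Finset.mem_range.mp hi))
      have h2 : ((b i : ℤ)) * Module.finrank k (𝒜 (j - i)) = (D i : ℤ) + D (i + 1) := by
        exact_mod_cast congrArg (Nat.cast : ℕ → ℤ) this
      rw [mul_assoc, h2]
    rw [Finset.sum_congr rfl hsum]
    have := telescope_sum (fun i => (D i : ℤ)) (m' + 1)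
    beta_reduce at this
    rw [show m' + 1 + 1 = m' + 2 from rfl] at this
    rw [this, hD0, hDtop, pow_succ]
    ring
  refine ⟨key, ?_⟩
  intro n hn
  rw [PowerSeries.coeff_mul, Finset.Nat.sum_antidiagonal_eq_sum_range_succ_mk]
  simp only [PowerSeries.coeff_mk]
  have hkey := key (n : ℤ)
  have hLn : ℒ (n : ℤ) = ⊥ := hLvanish _ (by exact_mod_cast hn)
  rw [hLn] at hkey
  rw [finrank_bot, Nat.cast_zero, mul_zero, add_zero] at hkey
  have hsub : ∑ i ∈ Finset.range (m' + 2),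
      (-1 : ℤ) ^ i * b i * Module.finrank k (𝒜 ((n : ℤ) - i)) =
      ∑ i ∈ Finset.range (n + 1),
      (-1 : ℤ) ^ i * b i * Module.finrank k (𝒜 ((n : ℤ) - i)) := by
    refine (Finset.sum_subset (by intro x hx; simp only [Finset.mem_range] at *; omega)
      fun x _ hx => ?_).symm
    simp only [Finset.mem_range, not_lt] at hx
    have : 𝒜 ((n : ℤ) - x) = ⊥ := hR.bot_of_neg _ (by omega)
    rw [this, finrank_bot]
    simp
  rw [hsub] at hkey
  rw [hkey, Finset.mul_sum]
  refine Finset.sum_congr rfl fun K hK => ?_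
  have hKn : K ≤ n := Nat.lt_succ_iff.mp (Finset.mem_range.mp hK)
  have hc : ((n - K : ℕ) : ℤ) = (n : ℤ) - K := by omega
  rw [hc]
  have h2 : (-1 : ℤ) ^ n * (-1 : ℤ) ^ K = (-1 : ℤ) ^ (n - K) := by
    rw [← pow_add]
    have h5 : n + K = (n - K) + 2 * K := by omega
    rw [h5, pow_add, pow_mul]
    norm_num
  rw [← h2]
  ring
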